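/- Let C be a Λ-multi-twisted code of length n over F_q generated as an F_q[x]-module by (a_{d,1}(x),…,a_{d,ℓ}(x)), 1 ≤ d ≤ k. Then C decomposes uniquely as C = ⊕_{w=1}^r C_w, where C_w is the F_w-linear code of length ℓ spanned by (ε_{w,1}a_{d,1}(α_w),…,ε_{w,ℓ}a_{d,ℓ}(α_w)) for 1 ≤ d ≤ k; moreover dim_{F_q} C = Σ_{w=1}^r dim_{F_w}(C_w) · deg g_w(x). -/

import Mathlib

open Polynomial Finset
open scoped Classical

noncomputable instance {F : Type*} [Field F] (f : Polynomial F) :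
    Algebra (Polynomial F) (AdjoinRoot f) := Ideal.Quotient.algebra _

instance {F : Type*} [Field F] (f : Polynomial F) :
    IsScalarTower F (Polynomial F) (AdjoinRoot f) := Ideal.Quotient.isScalarTower _ _ _

/-- Evaluation of an element of `F[x]/⟨p⟩` at the root of `g` in `F_w = F[x]/⟨g⟩`,
defined to be `0` when `g` does not divide `p` (i.e. when `ε_{w,i} = 0`). -/
noncomputable def evalMap {F : Type*} [Field F] (p g : Polynomial F) :
    AdjoinRoot p → AdjoinRoot g :=
  if hd : g ∣ p then
    (AdjoinRoot.liftAlgHom p (Algebra.ofId F (AdjoinRoot g)) (AdjoinRoot.root g) (by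
      have : aeval (AdjoinRoot.root g) p = 0 := by
        obtain ⟨c, hc⟩ := hd
        rw [hc, map_mul]
        simp [AdjoinRoot.aeval_eq, AdjoinRoot.mk_self]
      exact this) : AdjoinRoot p → AdjoinRoot g)
  else fun _ => 0

section Helpers

variable {F : Type*} [Field F]

lemma polySmul_eq (p c : Polynomial F) (v : AdjoinRoot p) :
    c • v = AdjoinRoot.mk p c * v := by
  rw [Algebra.smul_def]; rfl

lemma evalMap_mk {p g : Polynomial F} (h : g ∣ p) (f : Polynomial F) :
    evalMap p g (AdjoinRoot.mk p f) = AdjoinRoot.mk g f := by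
  simp only [evalMap, dif_pos h]
  exact AdjoinRoot.aeval_eq f

lemma evalMap_zero (p g : Polynomial F) : evalMap p g 0 = 0 := by
  simp only [evalMap]; split
  · exact map_zero _
  · rfl

lemma evalMap_add (p g : Polynomial F) (u v : AdjoinRoot p) :
    evalMap p g (u + v) = evalMap p g u + evalMap p g v := by
  simp only [evalMap]; split
  · exact map_add _ u v
  · simp

lemma evalMap_polySmul (p g : Polynomial F) (c : Polynomial F) (v : AdjoinRoot p) :
    evalMap p g (c • v) = AdjoinRoot.mk g c * evalMap p g v := by
  by_cases h : g ∣ p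
  · obtain ⟨f, rfl⟩ := AdjoinRoot.mk_surjective (g := p) v
    rw [polySmul_eq, ← map_mul, evalMap_mk h, evalMap_mk h, map_mul]
  · simp [evalMap, h]

noncomputable def evalLin (p g : Polynomial F) : AdjoinRoot p →ₗ[Polynomial F] AdjoinRoot g where
  toFun := evalMap p g
  map_add' := evalMap_add p g
  map_smul' c v := by
    show evalMap p g (c • v) = c • evalMap p g v
    rw [evalMap_polySmul, polySmul_eq]

lemma evalMap_Fsmul (p g : Polynomial F) (r : F) (v : AdjoinRoot p) :
    evalMap p g (r • v) = r • evalMap p g v := by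
  rw [← algebraMap_smul (Polynomial F) r v, ← algebraMap_smul (Polynomial F) r (evalMap p g v),
    Polynomial.algebraMap_eq, evalMap_polySmul, polySmul_eq]

lemma evalMap_sum (p g : Polynomial F) {ι : Type*} (s : Finset ι) (f : ι → AdjoinRoot p) :
    evalMap p g (∑ j ∈ s, f j) = ∑ j ∈ s, evalMap p g (f j) :=
  map_sum (evalLin p g) f s

end Helpers

set_option maxHeartbeats 1000000 in
/-- A `Λ`-multi-twisted code `C`, generated as an `F_q[x]`-module by `k` elements of
`V = ∏ i F_q[x]/⟨x^{m_i}−λ_i⟩`, decomposes via CRT as the direct sum of its constituents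
`C_w` (the `F_w`-spans of the evaluated generators), and
`dim_{F_q} C = Σ_w dim_{F_w} C_w · deg g_w`. -/
theorem multiTwisted_CRT_decomposition (F : Type*) [Field F] [Fintype F]
    (ℓ r k : ℕ) (m : Fin ℓ → ℕ) (hm : ∀ i, 0 < m i)
    (hco : ∀ i, Nat.Coprime (m i) (Fintype.card F))
    (Λ : Fin ℓ → F) (hΛ : ∀ i, Λ i ≠ 0)
    (g : Fin r → Polynomial F) (hirr : ∀ w, Irreducible (g w))
    (hmon : ∀ w, (g w).Monic) (hdist : Function.Injective g)
    (ε : Fin r → Fin ℓ → ℕ)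
    (hε : ∀ w i, ε w i = if g w ∣ (X ^ m i - C (Λ i)) then 1 else 0)
    (hfact : ∀ i, (X : Polynomial F) ^ m i - C (Λ i) = ∏ w, g w ^ ε w i)
    (a : Fin k → ∀ i, AdjoinRoot ((X : Polynomial F) ^ m i - C (Λ i)))
    (Ccode : Submodule (Polynomial F) (∀ i, AdjoinRoot ((X : Polynomial F) ^ m i - C (Λ i))))
    (hCcode : Ccode = Submodule.span (Polynomial F) (Set.range a))
    (Cw : ∀ w : Fin r, Submodule (AdjoinRoot (g w)) (Fin ℓ → AdjoinRoot (g w)))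
    (hCw : ∀ w, Cw w = Submodule.span (AdjoinRoot (g w))
      (Set.range fun d => fun i => evalMap (X ^ m i - C (Λ i)) (g w) (a d i))) :
    Function.Injective
        (fun (v : ∀ i, AdjoinRoot ((X : Polynomial F) ^ m i - C (Λ i))) =>
          fun (w : Fin r) (i : Fin ℓ) => evalMap (X ^ m i - C (Λ i)) (g w) (v i)) ∧
    ((fun (v : ∀ i, AdjoinRoot ((X : Polynomial F) ^ m i - C (Λ i))) =>
          fun (w : Fin r) (i : Fin ℓ) => evalMap (X ^ m i - C (Λ i)) (g w) (v i)) ''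
        (Ccode : Set (∀ i, AdjoinRoot ((X : Polynomial F) ^ m i - C (Λ i))))
      = {x : ∀ w : Fin r, Fin ℓ → AdjoinRoot (g w) | ∀ w, x w ∈ Cw w}) ∧
    Module.finrank F (Ccode.restrictScalars F)
      = ∑ w, Module.finrank (AdjoinRoot (g w)) (Cw w) * (g w).natDegree := by
  classical
  set p : Fin ℓ → Polynomial F := fun i => X ^ m i - C (Λ i) with hp
  -- pairwise coprimality of the g w
  have hcop : ∀ {w w' : Fin r}, w ≠ w' → IsCoprime (g w) (g w') := by
    intro w w' hne
    rw [(hirr w).coprime_iff_not_dvd]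
    intro hdvd
    exact hne (hdist (eq_of_monic_of_associated (hmon w) (hmon w')
      ((hirr w).associated_of_dvd (hirr w') hdvd)))
  -- single-coordinate injectivity
  have key0 : ∀ (i : Fin ℓ) (v : AdjoinRoot (p i)),
      (∀ w, evalMap (p i) (g w) v = 0) → v = 0 := by
    intro i v hv
    obtain ⟨f, rfl⟩ := AdjoinRoot.mk_surjective (g := p i) v
    rw [AdjoinRoot.mk_eq_zero, hp]
    simp only
    rw [hfact i]
    apply Finset.prod_dvd_of_coprime
    · intro w _ w' _ hne
      exact ((hcop hne).pow : IsCoprime (g w ^ ε w i) (g w' ^ ε w' i))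
    · intro w _
      by_cases hd : g w ∣ p i
      · rw [hε, if_pos (by simpa [hp] using hd), pow_one]
        have := hv w
        rw [evalMap_mk hd] at this
        exact AdjoinRoot.mk_eq_zero.mp this
      · rw [hε, if_neg (by simpa [hp] using hd), pow_zero]
        exact one_dvd _
  -- injectivity of the full map
  have hinj : Function.Injective
      (fun (v : ∀ i, AdjoinRoot (p i)) =>
        fun (w : Fin r) (i : Fin ℓ) => evalMap (p i) (g w) (v i)) := by
    intro v v' h
    funext i
    have hsub : v i - v' i = 0 := by
      apply key0 i
      intro w
      have h1 : evalMap (p i) (g w) (v i) = evalMap (p i) (g w) (v' i) :=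
        congrFun (congrFun h w) i
      have : evalMap (p i) (g w) (v i - v' i)
          = evalMap (p i) (g w) (v i) - evalMap (p i) (g w) (v' i) :=
        map_sub (evalLin (p i) (g w)) _ _
      rw [this, h1, sub_self]
    exact sub_eq_zero.mp hsub
  -- image is contained in the product of the C_w
  have himg1 : ∀ v ∈ Ccode, ∀ w : Fin r,
      (fun i => evalMap (p i) (g w) (v i)) ∈ Cw w := by
    intro v hv
    rw [hCcode] at hv
    induction hv using Submodule.span_induction with
    | mem x hx =>
      obtain ⟨d, rfl⟩ := hx
      intro w
      rw [hCw]
      exact Submodule.subset_span ⟨d, rfl⟩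
    | zero =>
      intro w
      have : (fun i => evalMap (p i) (g w) ((0 : ∀ i, AdjoinRoot (p i)) i))
          = (0 : Fin ℓ → AdjoinRoot (g w)) := funext fun i => evalMap_zero _ _
      rw [this]
      exact (Cw w).zero_mem
    | add u u' hu hu' ihu ihu' =>
      intro w
      have : (fun i => evalMap (p i) (g w) ((u + u') i))
          = (fun i => evalMap (p i) (g w) (u i)) + (fun i => evalMap (p i) (g w) (u' i)) :=
        funext fun i => evalMap_add _ _ _ _
      rw [this]
      exact (Cw w).add_mem (ihu w) (ihu' w)
    | smul c u hu ihu =>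
      intro w
      have : (fun i => evalMap (p i) (g w) ((c • u) i))
          = (AdjoinRoot.mk (g w) c) • (fun i => evalMap (p i) (g w) (u i)) := by
        funext i
        rw [Pi.smul_apply, Pi.smul_apply, evalMap_polySmul, smul_eq_mul]
      rw [this]
      exact (Cw w).smul_mem _ (ihu w)
  -- surjectivity onto the product of the C_w
  have hsurj : ∀ (x : ∀ w : Fin r, Fin ℓ → AdjoinRoot (g w)), (∀ w, x w ∈ Cw w) →
      ∃ v ∈ Ccode, (fun (w : Fin r) (i : Fin ℓ) => evalMap (p i) (g w) (v i)) = x := by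
    intro x hx
    have hc : ∀ w, ∃ c : Fin k → AdjoinRoot (g w),
        ∑ d, c d • (fun i => evalMap (p i) (g w) (a d i)) = x w := by
      intro w
      have hxw := hx w
      rw [hCw] at hxw
      exact (Submodule.mem_span_range_iff_exists_fun _).mp hxw
    choose c hc using hc
    have hγ : ∀ w d, ∃ γ : Polynomial F, AdjoinRoot.mk (g w) γ = c w d :=
      fun w d => AdjoinRoot.mk_surjective _
    choose γ hγ using hγ
    -- CRT idempotents
    have he : ∀ w : Fin r, ∃ e : Polynomial F, AdjoinRoot.mk (g w) e = 1 ∧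
        ∀ w', w' ≠ w → AdjoinRoot.mk (g w') e = 0 := by
      intro w
      have hco2 : IsCoprime (g w) (∏ w' ∈ Finset.univ.erase w, g w') :=
        IsCoprime.prod_right fun w' hw' => hcop (Ne.symm (Finset.mem_erase.mp hw').1)
      obtain ⟨u, t, hut⟩ := hco2
      refine ⟨t * ∏ w' ∈ Finset.univ.erase w, g w', ?_, ?_⟩
      · have h1 : AdjoinRoot.mk (g w) (u * g w + t * ∏ w' ∈ Finset.univ.erase w, g w') = 1 := by
          rw [hut, map_one]
        rw [map_add, map_mul, AdjoinRoot.mk_self, mul_zero, zero_add] at h1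
        exact h1
      · intro w' hw'
        rw [AdjoinRoot.mk_eq_zero]
        exact Dvd.dvd.mul_left
          (Finset.dvd_prod_of_mem _ (Finset.mem_erase.mpr ⟨hw', Finset.mem_univ w'⟩)) t
    choose e he1 he2 using he
    refine ⟨∑ w, ∑ d, (γ w d * e w) • a d, ?_, ?_⟩
    · rw [hCcode]
      exact sum_mem fun w _ => sum_mem fun d _ =>
        Submodule.smul_mem _ _ (Submodule.subset_span ⟨d, rfl⟩)
    · funext w i
      have hvi : (∑ w', ∑ d, (γ w' d * e w') • a d) i
          = ∑ w', ∑ d, (γ w' d * e w') • a d i := by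
        simp [Finset.sum_apply]
      rw [hvi, evalMap_sum]
      have hterm : ∀ w', ∑ d, evalMap (p i) (g w) ((γ w' d * e w') • a d i)
          = if w' = w then ∑ d, c w d • evalMap (p i) (g w) (a d i) else 0 := by
        intro w'
        by_cases hww : w' = w
        · subst hww
          rw [if_pos rfl]
          refine Finset.sum_congr rfl fun d _ => ?_
          rw [evalMap_polySmul, map_mul, hγ, he1, mul_one, smul_eq_mul]
        · rw [if_neg hww]
          refine Finset.sum_eq_zero fun d _ => ?_
          rw [evalMap_polySmul, map_mul, he2 w' w (Ne.symm hww), mul_zero, zero_mul]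
      rw [Finset.sum_congr rfl fun w' _ => (evalMap_sum (p i) (g w) Finset.univ
        (fun d => (γ w' d * e w') • a d i)).trans (hterm w')]
      rw [Finset.sum_ite_eq' Finset.univ w
        (fun _ => ∑ d, c w d • evalMap (p i) (g w) (a d i)), if_pos (Finset.mem_univ w)]
      have := congrFun (hc w) i
      rw [Finset.sum_apply] at this
      simpa using this
  refine ⟨hinj, ?_, ?_⟩
  · ext x
    constructor
    · rintro ⟨v, hv, rfl⟩
      exact fun w => himg1 v hv w
    · intro hx
      obtain ⟨v, hv, hΦ⟩ := hsurj x hx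
      exact ⟨v, hv, hΦ⟩
  · haveI hFact : ∀ w : Fin r, Fact (Irreducible (g w)) := fun w => ⟨hirr w⟩
    haveI hFD : ∀ w : Fin r, FiniteDimensional F (AdjoinRoot (g w)) :=
      fun w => (AdjoinRoot.powerBasis (hirr w).ne_zero).finite
    let L : ↥(Ccode.restrictScalars F) →ₗ[F] (∀ w : Fin r, ↥((Cw w).restrictScalars F)) :=
      { toFun := fun v => fun w => ⟨fun i => evalMap (p i) (g w) (v.1 i),
          (Submodule.restrictScalars_mem F _ _).mpr
            (himg1 v.1 ((Submodule.restrictScalars_mem F _ _).mp v.2) w)⟩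
        map_add' := fun u v => by
          funext w
          apply Subtype.ext
          funext i
          show evalMap (p i) (g w) ((↑(u + v) : ∀ i, AdjoinRoot (p i)) i) = _
          rw [Submodule.coe_add]
          exact evalMap_add _ _ _ _
        map_smul' := fun c v => by
          funext w
          apply Subtype.ext
          funext i
          show evalMap (p i) (g w) ((↑(c • v) : ∀ i, AdjoinRoot (p i)) i) = _
          rw [Submodule.coe_smul]
          exact evalMap_Fsmul _ _ _ _ }
    have hLinj : Function.Injective L := by
      intro u v huv
      apply Subtype.ext
      apply hinj
      funext w i
      exact congrArg (fun z => (z w).1 i) huv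
    have hLsurj : Function.Surjective L := by
      intro y
      obtain ⟨v, hv, hΦ⟩ := hsurj (fun w => (y w).1)
        (fun w => (Submodule.restrictScalars_mem F _ _).mp (y w).2)
      refine ⟨⟨v, (Submodule.restrictScalars_mem F _ _).mpr hv⟩, ?_⟩
      funext w
      apply Subtype.ext
      exact congrFun hΦ w
    have eL := LinearEquiv.ofBijective L ⟨hLinj, hLsurj⟩
    rw [eL.finrank_eq, Module.finrank_pi_fintype F]
    refine Finset.sum_congr rfl fun w _ => ?_
    have h1 : Module.finrank F (AdjoinRoot (g w)) = (g w).natDegree := by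
      rw [(AdjoinRoot.powerBasis (hirr w).ne_zero).finrank, AdjoinRoot.powerBasis_dim]
    have h2 : Module.finrank F (AdjoinRoot (g w))
          * Module.finrank (AdjoinRoot (g w)) ↥((Cw w).restrictScalars F)
        = Module.finrank F ↥((Cw w).restrictScalars F) :=
      Module.finrank_mul_finrank F (AdjoinRoot (g w)) _
    have h3 : Module.finrank (AdjoinRoot (g w)) ↥((Cw w).restrictScalars F)
        = Module.finrank (AdjoinRoot (g w)) ↥(Cw w) :=
      (Submodule.restrictScalarsEquiv F _ _ (Cw w)).finrank_eq
    rw [← h2, h3, h1, mul_comm]
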